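/- Let α₆ := (2/3)·(2 + (18√11 − 43)^{1/3}/5^{2/3} − 7/(5^{1/3}·(18√11 − 43)^{1/3})). Then 4/5 < α₆ < 2/√5, and for every real α with 4/5 < α < 2/√5 one has 4 − 16/(5α) ≤ (4 − 5α²)/(6 − 5α) if and only if α ≤ α₆; in particular 4 − 16/(5α₆) = (4 − 5α₆²)/(6 − 5α₆). (This is the statement that α_*(6) = α₆ for m(α,6) = min{(4−5α²)/(6−5α), 4 − 16/(5α)}.) -/

import Mathlib

/-- The constant
`α_*(6) = (2/3)·(2 + (18√11 − 43)^{1/3}/5^{2/3} − 7/(5^{1/3}·(18√11 − 43)^{1/3}))`. -/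
noncomputable def alphaStar6 : ℝ :=
  (2 / 3) * (2 + (18 * Real.sqrt 11 - 43) ^ ((1 : ℝ) / 3) / (5 : ℝ) ^ ((2 : ℝ) / 3)
    - 7 / ((5 : ℝ) ^ ((1 : ℝ) / 3) * (18 * Real.sqrt 11 - 43) ^ ((1 : ℝ) / 3)))

/-- Auxiliary algebraic identity: if `125v⁶ + 430v³ − 343 = 0` then
`α = (2/3)(2 + v − 7/(5v))` satisfies the cubic `25α³ − 100α² + 180α − 96 = 0`. -/
lemma alphaStar6_aux (v : ℝ) (hv : v ≠ 0) (key : 125*v^6 + 430*v^3 - 343 = 0) :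
    25*((2/3)*(2+v-7/(5*v)))^3 - 100*((2/3)*(2+v-7/(5*v)))^2
      + 180*((2/3)*(2+v-7/(5*v))) - 96 = 0 := by
  field_simp
  linear_combination 200 * key

/-- `alphaStar6` is a root of the cubic `25α³ − 100α² + 180α − 96`. -/
lemma alphaStar6_cubic : 25*alphaStar6^3 - 100*alphaStar6^2 + 180*alphaStar6 - 96 = 0 := by
  have hs11 : (Real.sqrt 11)^2 = 11 := Real.sq_sqrt (by norm_num)
  set s := Real.sqrt 11 with hs
  have hsnn : 0 ≤ s := Real.sqrt_nonneg 11
  have hx : (0:ℝ) < 18*s - 43 := by nlinarith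
  set c := (18*s - 43) ^ ((1:ℝ)/3) with hcdef
  have hcpos : 0 < c := Real.rpow_pos_of_pos hx _
  have hc3 : c^3 = 18*s - 43 := by
    rw [hcdef, ← Real.rpow_natCast ((18*s-43) ^ ((1:ℝ)/3)) 3, ← Real.rpow_mul hx.le]
    norm_num
  set p := (5:ℝ) ^ ((1:ℝ)/3) with hpdef
  have hppos : 0 < p := Real.rpow_pos_of_pos (by norm_num) _
  have hp3 : p^3 = 5 := by
    rw [hpdef, ← Real.rpow_natCast ((5:ℝ) ^ ((1:ℝ)/3)) 3, ← Real.rpow_mul (by norm_num : (0:ℝ) ≤ 5)]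
    norm_num
  have hq : (5:ℝ) ^ ((2:ℝ)/3) = p^2 := by
    rw [hpdef, ← Real.rpow_natCast ((5:ℝ) ^ ((1:ℝ)/3)) 2, ← Real.rpow_mul (by norm_num : (0:ℝ) ≤ 5)]
    norm_num
  set u := c / p^2 with hudef
  have hune : u ≠ 0 := by positivity
  have hu3 : u^3 = (18*s - 43)/25 := by
    rw [hudef, div_pow, hc3]
    have h6 : (p^2)^3 = 25 := by
      have : (p^2)^3 = (p^3)^2 := by ring
      rw [this, hp3]; norm_num
    rw [h6]
  have key : 125*u^6 + 430*u^3 - 343 = 0 := by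
    linear_combination (125*u^3 + 5*(18*s-43) + 430) * hu3 + (1620/25) * hs11
  have hpc : p * c = 5 * u := by
    rw [hudef]
    field_simp
    linear_combination hp3
  have ha : alphaStar6 = (2/3) * (2 + u - 7/(5*u)) := by
    rw [alphaStar6, ← hs, hq, ← hcdef, ← hpdef, ← hudef, hpc]
  rw [ha]
  exact alphaStar6_aux u hune key

/-- `4/5 < α₆ < 2/√5`, and for every real `α` with `4/5 < α < 2/√5`
one has `4 − 16/(5α) ≤ (4 − 5α²)/(6 − 5α)` if and only if `α ≤ α₆`; in particular
`4 − 16/(5α₆) = (4 − 5α₆²)/(6 − 5α₆)`. This is the statement `α_*(6) = α₆`. -/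
theorem statement6 :
    (4 / 5 < alphaStar6 ∧ alphaStar6 < 2 / Real.sqrt 5) ∧
    (∀ α : ℝ, 4 / 5 < α → α < 2 / Real.sqrt 5 →
      (4 - 16 / (5 * α) ≤ (4 - 5 * α ^ 2) / (6 - 5 * α) ↔ α ≤ alphaStar6)) ∧
    4 - 16 / (5 * alphaStar6) = (4 - 5 * alphaStar6 ^ 2) / (6 - 5 * alphaStar6) := by
  have hcube := alphaStar6_cubic
  set a := alphaStar6 with hadef
  have hs5 : (0:ℝ) < Real.sqrt 5 := Real.sqrt_pos.mpr (by norm_num)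
  have hs5sq : (Real.sqrt 5)^2 = 5 := Real.sq_sqrt (by norm_num)
  -- lower bound
  have ha1 : 4/5 < a := by
    by_contra h
    push_neg at h
    nlinarith [hcube, mul_nonneg (sub_nonneg.mpr h) (sq_nonneg (a + 4/5 - 8/3)),
      mul_nonneg (sub_nonneg.mpr h) (sq_nonneg (a - 4/5))]
  -- upper bound: a < 0.8944 = 559/625 < 2/√5
  have haub : a < 559/625 := by
    by_contra h
    push_neg at h
    nlinarith [hcube, mul_nonneg (sub_nonneg.mpr h) (sq_nonneg (a + 559/625 - 8/3)),
      mul_nonneg (sub_nonneg.mpr h) (sq_nonneg (a - 559/625))]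
  have ha4 : 5*a^2 < 4 := by nlinarith [ha1, haub]
  have ha2 : a < 2 / Real.sqrt 5 := by
    rw [lt_div_iff₀ hs5]
    nlinarith [hs5sq, hs5, ha4, ha1, Real.sqrt_nonneg 5]
  have h6a : 0 < 6 - 5*a := by nlinarith
  have h5a : 0 < 5*a := by linarith
  refine ⟨⟨ha1, ha2⟩, ?_, ?_⟩
  · intro α hα1 hα2
    have hα2' : 5*α^2 < 4 := by
      rw [lt_div_iff₀ hs5] at hα2
      nlinarith [hs5sq, hs5, hα2, hα1, mul_pos (show (0:ℝ) < 2 - α * Real.sqrt 5 by linarith)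
        (show (0:ℝ) < 2 + α * Real.sqrt 5 by nlinarith [Real.sqrt_nonneg 5])]
    have h1 : 0 < 5*α := by linarith
    have h2 : 0 < 6 - 5*α := by nlinarith
    have e1 : 4 - 16/(5*α) = (20*α - 16)/(5*α) := by field_simp; ring
    rw [e1, div_le_div_iff₀ h1 h2]
    constructor
    · intro h
      have hfle : 25*α^3 - 100*α^2 + 180*α - 96 ≤ 0 := by nlinarith [h]
      by_contra hc
      push_neg at hc
      nlinarith [hcube, hfle, mul_nonneg (le_of_lt (sub_pos.mpr hc)) (sq_nonneg (α + a - 8/3)),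
        mul_nonneg (le_of_lt (sub_pos.mpr hc)) (sq_nonneg (α - a))]
    · intro h
      have hfle : 25*α^3 - 100*α^2 + 180*α - 96 ≤ 0 := by
        nlinarith [hcube, mul_nonneg (sub_nonneg.mpr h) (sq_nonneg (α + a - 8/3)),
          mul_nonneg (sub_nonneg.mpr h) (sq_nonneg (α - a))]
      nlinarith [hfle]
  · rw [eq_div_iff (ne_of_gt h6a)]
    field_simp
    linear_combination hcube
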